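/- For every nonzero special function x for Q, the subspace B_x of A is an indecomposable sub-bimodule of the A-A-bimodule A, and supp(x) = supp(B_x). -/

import Mathlib

set_option maxHeartbeats 1000000
set_option synthInstance.maxHeartbeats 400000

namespace DPF

open Matrix

/-- A finite quiver on `Fin n` (given by an arrow relation, no loops, no two-cycles)
whose underlying (undirected simple) graph is a tree. -/
structure TreeQuiver (n : ℕ) : Type where
  arr : Fin n → Fin n → Prop
  loopless : ∀ i, ¬ arr i i
  oneway : ∀ i j, arr i j → ¬ arr j i
  isTree : (SimpleGraph.fromRel arr).IsTree

namespace TreeQuiver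

variable {n : ℕ}

/-- The underlying simple graph of the quiver. -/
def G (Q : TreeQuiver n) : SimpleGraph (Fin n) := SimpleGraph.fromRel Q.arr

/-- `Q.Reach i j` : `j` is a successor of `i`, i.e. there is an oriented
(possibly trivial) path from `i` to `j`. -/
def Reach (Q : TreeQuiver n) (i j : Fin n) : Prop := Relation.ReflTransGen Q.arr i j

/-- `i` is a sink (no outgoing arrows). -/
def IsSink (Q : TreeQuiver n) (i : Fin n) : Prop := ∀ j, ¬ Q.arr i j

/-- `i` is a source (no incoming arrows). -/
def IsSource (Q : TreeQuiver n) (i : Fin n) : Prop := ∀ j, ¬ Q.arr j i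

/-- The degree of a vertex in the underlying graph. -/
noncomputable def deg (Q : TreeQuiver n) (i : Fin n) : ℕ := {j | Q.G.Adj i j}.ncard

/-- `i ∈ K(Q)`: `i` is a sink or a source. -/
def inK (Q : TreeQuiver n) (i : Fin n) : Prop := Q.IsSink i ∨ Q.IsSource i

/-- `i ∈ K'(Q)`: a sink or a source of degree at least 2. -/
def inK' (Q : TreeQuiver n) (i : Fin n) : Prop := Q.inK i ∧ 2 ≤ Q.deg i

/-- `Q` is admissible: all vertices of degree at least 3 are sinks or sources. -/
def Admissible (Q : TreeQuiver n) : Prop := ∀ i, 3 ≤ Q.deg i → Q.inK i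

/-- A maximal chain of `Q` is (the oriented path between) a pair `(s, t)` where `s` is a
source, `t` is a sink, and `t` is reachable from `s`. -/
def IsMaxChain (Q : TreeQuiver n) (s t : Fin n) : Prop :=
  Q.IsSource s ∧ Q.IsSink t ∧ Q.Reach s t

/-- The vertex set of a chain from `s` to `t`. -/
def chainSet (Q : TreeQuiver n) (s t : Fin n) : Set (Fin n) := {v | Q.Reach s v ∧ Q.Reach v t}

/-- The vertex set of the union of a collection `S` of (maximal) chains, i.e. of the
corresponding "support" subgraph. -/
def suppVerts (Q : TreeQuiver n) (S : Set (Fin n × Fin n)) : Set (Fin n) :=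
  {v | ∃ c ∈ S, v ∈ Q.chainSet c.1 c.2}

/-- The adjacency relation of the subgraph given by the union of the chains in `S`. -/
def suppAdj (Q : TreeQuiver n) (S : Set (Fin n × Fin n)) (i j : Fin n) : Prop :=
  Q.G.Adj i j ∧ ∃ c ∈ S, i ∈ Q.chainSet c.1 c.2 ∧ j ∈ Q.chainSet c.1 c.2

/-- The degree of a vertex in the subgraph given by the union of the chains in `S`. -/
noncomputable def suppDeg (Q : TreeQuiver n) (S : Set (Fin n × Fin n)) (i : Fin n) : ℕ :=
  {j | Q.suppAdj S i j}.ncard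

/-- The subgraph given by the union of the chains in `S` is connected. -/
def SuppConnected (Q : TreeQuiver n) (S : Set (Fin n × Fin n)) : Prop :=
  ∀ u ∈ Q.suppVerts S, ∀ v ∈ Q.suppVerts S, Relation.ReflTransGen (Q.suppAdj S) u v

/-- The two unions of (maximal) chains `S`, `T` are equal as subgraphs of `Q`. -/
def SuppEq (Q : TreeQuiver n) (S T : Set (Fin n × Fin n)) : Prop :=
  Q.suppVerts S = Q.suppVerts T ∧ ∀ i j, Q.suppAdj S i j ↔ Q.suppAdj T i j

/-- A path function: `α i` is a successor of `i` or `0` (here: `none`). -/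
def IsPathFun (Q : TreeQuiver n) (α : Fin n → Option (Fin n)) : Prop :=
  ∀ i j, α i = some j → Q.Reach i j

/-- Monotonicity of a path function. -/
def MonotoneFun (Q : TreeQuiver n) (α : Fin n → Option (Fin n)) : Prop :=
  ∀ i j x, Q.Reach j i → α i = some x → ∃ y, α j = some y ∧ Q.Reach y x

/-- The support of a function `α : Q₀ → Q₀ ∪ {0}`: the set of maximal chains containing
some value of `α`. -/
def suppF (Q : TreeQuiver n) (α : Fin n → Option (Fin n)) : Set (Fin n × Fin n) :=
  {c | Q.IsMaxChain c.1 c.2 ∧ ∃ i x, α i = some x ∧ x ∈ Q.chainSet c.1 c.2}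

/-- A special function: a monotone path function with connected support such that any
sink-or-source vertex of the support sent to `0` has degree `1` in the support. -/
def SpecialFun (Q : TreeQuiver n) (α : Fin n → Option (Fin n)) : Prop :=
  Q.IsPathFun α ∧ Q.MonotoneFun α ∧ Q.SuppConnected (Q.suppF α) ∧
    ∀ i, Q.inK i → i ∈ Q.suppVerts (Q.suppF α) → α i = none → Q.suppDeg (Q.suppF α) i = 1

/-- `Q.Gamma s t`: the vertex set of the connected component of `t` in the graph obtained
from `Q` by deleting the vertex `s`. -/
def Gamma (Q : TreeQuiver n) (s t : Fin n) : Set (Fin n) :=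
  {v | Relation.ReflTransGen (fun a b => Q.G.Adj a b ∧ a ≠ s ∧ b ≠ s) t v}

end TreeQuiver

open TreeQuiver

section Algebra

variable {n : ℕ} (Q : TreeQuiver n) (k : Type) [Field k]

/-- The path algebra of the tree quiver `Q` over `k`, realized concretely as the
subalgebra of `Matrix (Fin n) (Fin n) k` of matrices supported on the reachability
relation; the matrix unit in position `(j, i)` corresponds to the unique path
`a_{ji}` from `i` to `j`. -/
def pathAlg : Subalgebra k (Matrix (Fin n) (Fin n) k) where
  carrier := {x | ∀ i j, ¬ Q.Reach j i → x i j = 0}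
  mul_mem' := by
    intro x y hx hy i j hij
    rw [Matrix.mul_apply]
    refine Finset.sum_eq_zero fun m _ => ?_
    by_cases h1 : Q.Reach m i
    · have h2 : ¬ Q.Reach j m := fun h2 => hij (Relation.ReflTransGen.trans h2 h1)
      rw [hy m j h2, mul_zero]
    · rw [hx i m h1, zero_mul]
  one_mem' := by
    intro i j hij
    have hne : i ≠ j := by rintro rfl; exact hij Relation.ReflTransGen.refl
    exact Matrix.one_apply_ne hne
  add_mem' := by
    intro x y hx hy i j hij
    simp only [Matrix.add_apply, hx i j hij, hy i j hij, add_zero]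
  zero_mem' := by intro i j hij; rfl
  algebraMap_mem' := by
    intro r i j hij
    have hne : i ≠ j := by rintro rfl; exact hij Relation.ReflTransGen.refl
    simp [Matrix.algebraMap_matrix_apply, hne]

theorem std_mem (t s : Fin n) (h : Q.Reach s t) :
    Matrix.single t s (1 : k) ∈ pathAlg Q k := by
  intro i j hij
  by_cases h1 : t = i ∧ s = j
  · obtain ⟨rfl, rfl⟩ := h1
    exact absurd h hij
  · simp only [Matrix.single, Matrix.of_apply, if_neg h1]

/-- The path `a_{ts}` from `s` to `t`, as an element of the path algebra
(by convention `0` if `t` is not a successor of `s`). -/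
noncomputable def aEl (t s : Fin n) : pathAlg Q k :=
  haveI := Classical.dec (Q.Reach s t)
  if h : Q.Reach s t then ⟨Matrix.single t s 1, std_mem Q k t s h⟩ else 0

/-- The trivial path `e_i` at the vertex `i`. -/
noncomputable def e (i : Fin n) : pathAlg Q k :=
  ⟨Matrix.single i i 1, std_mem Q k i i Relation.ReflTransGen.refl⟩

/-- `B` is a two-sided ideal of the path algebra, i.e. a sub-bimodule of the regular
`A`-`A`-bimodule `A`. -/
def IsIdeal (B : Submodule k ↥(pathAlg Q k)) : Prop :=
  (∀ a : ↥(pathAlg Q k), ∀ x ∈ B, a * x ∈ B) ∧ (∀ a : ↥(pathAlg Q k), ∀ x ∈ B, x * a ∈ B)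

/-- `B` is an indecomposable sub-bimodule of `A`: a nonzero two-sided ideal which does not
decompose as an (internal) direct sum of two nonzero sub-bimodules. -/
def Indec (B : Submodule k ↥(pathAlg Q k)) : Prop :=
  IsIdeal Q k B ∧ B ≠ ⊥ ∧
    ∀ B1 B2 : Submodule k ↥(pathAlg Q k), IsIdeal Q k B1 → IsIdeal Q k B2 →
      B1 ⊔ B2 = B → B1 ⊓ B2 = ⊥ → B1 = ⊥ ∨ B2 = ⊥

/-- The support of a two-sided ideal `B`: the set of maximal chains `(s, t)` of `Q`
such that `a_{ts} ∈ B`. -/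
def suppB (B : Submodule k ↥(pathAlg Q k)) : Set (Fin n × Fin n) :=
  {c | Q.IsMaxChain c.1 c.2 ∧ aEl Q k c.2 c.1 ∈ B}

/-- The indecomposable projective left module `P_j = A e_j`, as a left ideal of `A`. -/
def Pmod (j : Fin n) : Submodule ↥(pathAlg Q k) ↥(pathAlg Q k) where
  carrier := {x | x * e Q k j = x}
  add_mem' := by
    intro a b ha hb
    show (a + b) * e Q k j = a + b
    rw [add_mul]
    rw [show a * e Q k j = a from ha, show b * e Q k j = b from hb]
  zero_mem' := by
    show (0 : ↥(pathAlg Q k)) * e Q k j = 0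
    rw [zero_mul]
  smul_mem' := by
    intro c x hx
    show (c • x) * e Q k j = c • x
    rw [smul_eq_mul, mul_assoc, show x * e Q k j = x from hx]

/-- `B e_i`, as a left ideal (left `A`-submodule) of `A`; here `B` is a two-sided ideal. -/
def BeiL (B : Submodule k ↥(pathAlg Q k)) (hB : IsIdeal Q k B) (i : Fin n) :
    Submodule ↥(pathAlg Q k) ↥(pathAlg Q k) where
  carrier := {x | x ∈ B ∧ x * e Q k i = x}
  add_mem' := by
    intro a b ha hb
    exact ⟨B.add_mem ha.1 hb.1, by rw [add_mul, ha.2, hb.2]⟩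
  zero_mem' := ⟨B.zero_mem, by rw [zero_mul]⟩
  smul_mem' := by
    intro c x hx
    refine ⟨?_, ?_⟩
    · show c * x ∈ B
      exact hB.1 c x hx.1
    · show (c • x) * e Q k i = c • x
      rw [smul_eq_mul, mul_assoc, hx.2]

/-- A left `A`-submodule `N` of `A` is (zero or) indecomposable. -/
def IndecL (N : Submodule ↥(pathAlg Q k) ↥(pathAlg Q k)) : Prop :=
  N ≠ ⊥ ∧ ∀ N1 N2 : Submodule ↥(pathAlg Q k) ↥(pathAlg Q k),
    N1 ⊔ N2 = N → N1 ⊓ N2 = ⊥ → N1 = ⊥ ∨ N2 = ⊥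

/-- `x` is "the" function `x_B` associated to the indecomposable sub-bimodule `B`:
`x i = none` iff `B e_i = 0`, and `x i = some j` implies `B e_i ≅ P_j` as left `A`-modules. -/
def IsXB (B : Submodule k ↥(pathAlg Q k)) (hB : IsIdeal Q k B) (x : Fin n → Option (Fin n)) :
    Prop :=
  ∀ i, (x i = none ↔ BeiL Q k B hB i = ⊥) ∧
    ∀ j, x i = some j →
      Nonempty (↥(BeiL Q k B hB i) ≃ₗ[↥(pathAlg Q k)] ↥(Pmod Q k j))

/-- The subspace `B_x` of `A` associated to a (special) function `x` : the `k`-linear span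
of all paths `a_{ts}` with `x s ≠ 0` and `t` a successor of `x s`. -/
def Bspan (x : Fin n → Option (Fin n)) : Submodule k ↥(pathAlg Q k) :=
  Submodule.span k {v | ∃ s xs t, x s = some xs ∧ Q.Reach xs t ∧ v = aEl Q k t s}

/-- The two-sided ideal `J_i`: the span of all paths of `Q` except the trivial path `e_i`. -/
def J (i : Fin n) : Submodule k ↥(pathAlg Q k) :=
  Submodule.span k {v | ∃ t s, Q.Reach s t ∧ ¬(t = i ∧ s = i) ∧ v = aEl Q k t s}

/-- The indecomposable direct summand `J_s^{(q)}` of `J_s` corresponding to the connected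
component (of `Q` with `s` deleted) containing the neighbour `t` of `s`: the span of all
paths `a_{pq}` with `p, q ∈ Γ^{(t)} ∪ {s}` other than `e_s`. -/
def Jc (s t : Fin n) : Submodule k ↥(pathAlg Q k) :=
  Submodule.span k {v | ∃ p q, Q.Reach q p ∧ p ∈ Q.Gamma s t ∪ {s} ∧ q ∈ Q.Gamma s t ∪ {s} ∧
    ¬(p = s ∧ q = s) ∧ v = aEl Q k p q}

end Algebra

section Tensor

open TensorProduct

/-- The multiplication map `I ⊗_k J → A` for two `k`-subspaces `I`, `J` of a `k`-algebra `A`. -/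
noncomputable def mulMap (k A : Type) [CommRing k] [Ring A] [Algebra k A]
    (I J : Submodule k A) : (↥I ⊗[k] ↥J) →ₗ[k] A :=
  TensorProduct.lift (LinearMap.compl₁₂ (LinearMap.mul k A) I.subtype J.subtype)

/-- The submodule of `I ⊗_k J` spanned by the "balancing" relators `ba ⊗ d - b ⊗ ad`;
the quotient of `I ⊗_k J` by it is `I ⊗_A J`, so the multiplication map
`I ⊗_A J → A` is injective if and only if the kernel of `mulMap` equals `balRel`. -/
noncomputable def balRel (k A : Type) [CommRing k] [Ring A] [Algebra k A]
    (I J : Submodule k A) : Submodule k (↥I ⊗[k] ↥J) :=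
  Submodule.span k {z | ∃ (b : I) (d : J) (a : A) (h1 : (b : A) * a ∈ I) (h2 : a * (d : A) ∈ J),
    z = (⟨(b : A) * a, h1⟩ : I) ⊗ₜ[k] d - (b ⊗ₜ[k] (⟨a * (d : A), h2⟩ : J))}

end Tensor


section AuxQuiver

open TreeQuiver Relation

variable {n : ℕ} {Q : TreeQuiver n}

theorem arr_ne {a b : Fin n} (h : Q.arr a b) : a ≠ b :=
  fun e => Q.loopless a (e ▸ h)

theorem adj_of_arr {a b : Fin n} (h : Q.arr a b) : Q.G.Adj a b := by
  show (SimpleGraph.fromRel Q.arr).Adj a b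
  exact (SimpleGraph.fromRel_adj _ _ _).2 ⟨arr_ne h, Or.inl h⟩

/-- Reachability in exactly `k` steps. -/
def ReachLen (Q : TreeQuiver n) : ℕ → Fin n → Fin n → Prop
  | 0 => Eq
  | k+1 => fun a b => ∃ c, Q.arr a c ∧ ReachLen Q k c b

theorem reachLen_tail : ∀ (k : ℕ) {a c b : Fin n}, ReachLen Q k a c → Q.arr c b →
    ReachLen Q (k+1) a b
  | 0, a, c, b, h, h2 => by cases h; exact ⟨b, h2, rfl⟩
  | k+1, a, c, b, ⟨d, hd, h⟩, h2 => ⟨d, hd, reachLen_tail k h h2⟩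

theorem exists_reachLen {a b : Fin n} (h : Q.Reach a b) : ∃ k, ReachLen Q k a b := by
  induction h with
  | refl => exact ⟨0, rfl⟩
  | tail _ h2 ih => exact ⟨ih.choose + 1, reachLen_tail _ ih.choose_spec h2⟩

theorem reach_of_reachLen : ∀ (k : ℕ) {a b : Fin n}, ReachLen Q k a b → Q.Reach a b
  | 0, a, b, h => by cases h; exact Relation.ReflTransGen.refl
  | k+1, a, b, ⟨c, hc, h⟩ => Relation.ReflTransGen.head hc (reach_of_reachLen k h)

theorem no_cycle {a b : Fin n} (hab : Q.arr a b) : ¬ Q.Reach b a := by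
  intro hreach
  obtain ⟨k0, hk0⟩ := exists_reachLen hreach
  -- auxiliary: a chain either avoids the edge `s(a,b)` or contains it, giving a shorter chain
  have aux : ∀ (k : ℕ) (c : Fin n), ReachLen Q k c a →
      (Q.G \ SimpleGraph.fromEdgeSet {s(a,b)}).Reachable c a ∨ ∃ k' < k, ReachLen Q k' b a := by
    intro k
    induction k with
    | zero => intro c h; cases h; exact Or.inl (SimpleGraph.Reachable.refl _)
    | succ k ih =>
      rintro c ⟨d, hcd, hd⟩
      by_cases hstep : c = a ∧ d = b
      · exact Or.inr ⟨k, Nat.lt_succ_self k, hstep.2 ▸ hd⟩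
      · have hadj : (Q.G \ SimpleGraph.fromEdgeSet {s(a,b)}).Adj c d := by
          refine ⟨adj_of_arr hcd, ?_⟩
          rw [SimpleGraph.fromEdgeSet_adj]
          rintro ⟨he, -⟩
          rw [Set.mem_singleton_iff, Sym2.eq_iff] at he
          rcases he with ⟨rfl, rfl⟩ | ⟨rfl, rfl⟩
          · exact hstep ⟨rfl, rfl⟩
          · exact Q.oneway _ _ hab hcd
        rcases ih d hd with h | ⟨k', hk', h⟩
        · exact Or.inl (hadj.reachable.trans h)
        · exact Or.inr ⟨k', hk'.trans (Nat.lt_succ_self k), h⟩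
  -- bridge property
  have hbridge : ¬ (Q.G \ SimpleGraph.fromEdgeSet {s(a,b)}).Reachable a b := by
    have hacyc := Q.isTree.IsAcyclic
    rw [SimpleGraph.isAcyclic_iff_forall_adj_isBridge] at hacyc
    exact (SimpleGraph.isBridge_iff).1 (hacyc (adj_of_arr hab))
  -- strong induction on k
  have main : ∀ k : ℕ, ReachLen Q k b a → False := by
    intro k
    induction k using Nat.strong_induction_on with
    | _ k ihk =>
      intro hk
      rcases aux k b hk with h | ⟨k', hk', h⟩
      · exact hbridge h.symm
      · exact ihk k' hk' h
  exact main k0 hk0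

theorem transGen_irrefl {a : Fin n} (h : Relation.TransGen Q.arr a a) : False := by
  cases h with
  | single h => exact Q.loopless a h
  | tail h1 h2 => exact no_cycle h2 h1.to_reflTransGen

theorem wf_arr (Q : TreeQuiver n) : WellFounded Q.arr := by
  haveI : IsTrans (Fin n) (Relation.TransGen Q.arr) := inferInstance
  haveI : IsIrrefl (Fin n) (Relation.TransGen Q.arr) := ⟨fun _ h => transGen_irrefl h⟩
  exact Subrelation.wf (fun h => Relation.TransGen.single h)
    (Finite.wellFounded_of_trans_of_irrefl (Relation.TransGen Q.arr))

theorem wf_arr_swap (Q : TreeQuiver n) : WellFounded (Function.swap Q.arr) := by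
  haveI : IsTrans (Fin n) (Relation.TransGen (Function.swap Q.arr)) := inferInstance
  haveI : IsIrrefl (Fin n) (Relation.TransGen (Function.swap Q.arr)) := by
    refine ⟨fun a h => ?_⟩
    exact transGen_irrefl (Q := Q) ((Relation.transGen_swap).1 h)
  exact Subrelation.wf (fun h => Relation.TransGen.single h)
    (Finite.wellFounded_of_trans_of_irrefl (Relation.TransGen (Function.swap Q.arr)))

theorem exists_source (Q : TreeQuiver n) (v : Fin n) : ∃ a, Q.IsSource a ∧ Q.Reach a v := by
  induction v using (wf_arr Q).induction with
  | _ v ih =>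
    by_cases hs : Q.IsSource v
    · exact ⟨v, hs, Relation.ReflTransGen.refl⟩
    · simp only [TreeQuiver.IsSource, not_forall, not_not] at hs
      obtain ⟨w, hw⟩ := hs
      obtain ⟨a, ha, hav⟩ := ih w hw
      exact ⟨a, ha, hav.tail hw⟩

theorem exists_sink (Q : TreeQuiver n) (v : Fin n) : ∃ b, Q.IsSink b ∧ Q.Reach v b := by
  induction v using (wf_arr_swap Q).induction with
  | _ v ih =>
    by_cases hs : Q.IsSink v
    · exact ⟨v, hs, Relation.ReflTransGen.refl⟩
    · simp only [TreeQuiver.IsSink, not_forall, not_not] at hs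
      obtain ⟨w, hw⟩ := hs
      obtain ⟨b, hb, hvb⟩ := ih w hw
      exact ⟨b, hb, Relation.ReflTransGen.head hw hvb⟩

theorem sink_reach {b j : Fin n} (hb : Q.IsSink b) (h : Q.Reach b j) : j = b := by
  rcases Relation.ReflTransGen.cases_head h with rfl | ⟨c, hc, -⟩
  · rfl
  · exact absurd hc (hb c)

theorem source_reach {a i : Fin n} (ha : Q.IsSource a) (h : Q.Reach i a) : i = a := by
  rcases Relation.ReflTransGen.cases_tail h with rfl | ⟨c, -, hc⟩
  · rfl
  · exact absurd hc (ha c)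

/-- Two paths into a common target either are comparable or merge. -/
theorem mergeM {u u' t : Fin n} (h : Q.Reach u t) (h' : Q.Reach u' t) :
    Q.Reach u u' ∨ Q.Reach u' u ∨ ∃ m p p', Q.Reach u p ∧ Q.arr p m ∧ Q.Reach u' p' ∧
      Q.arr p' m ∧ p ≠ p' ∧ Q.Reach m t := by
  induction h using Relation.ReflTransGen.head_induction_on with
  | refl => exact Or.inr (Or.inl h')
  | head hac hct ih =>
    rename_i a c
    rcases ih with h1 | h1 | ⟨m, p, p', h1, h2, h3, h4, h5, h6⟩
    · exact Or.inl (Relation.ReflTransGen.head hac h1)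
    · rcases Relation.ReflTransGen.cases_tail h1 with rfl | ⟨p', hp', harr⟩
      · exact Or.inl (Relation.ReflTransGen.single hac)
      · by_cases hpa : p' = a
        · exact Or.inr (Or.inl (hpa ▸ hp'))
        · exact Or.inr (Or.inr ⟨c, a, p', Relation.ReflTransGen.refl, hac, hp', harr,
            fun e => hpa e.symm, hct⟩)
    · exact Or.inr (Or.inr ⟨m, p, p', Relation.ReflTransGen.head hac h1, h2, h3, h4, h5, h6⟩)

/-- Two paths from a common source either are comparable or diverge. -/
theorem divergeM {s w w' : Fin n} (h : Q.Reach s w) (h' : Q.Reach s w') :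
    Q.Reach w w' ∨ Q.Reach w' w ∨ ∃ m q q', Q.Reach s m ∧ Q.arr m q ∧ Q.arr m q' ∧
      q ≠ q' ∧ Q.Reach q w ∧ Q.Reach q' w' := by
  induction h' with
  | refl => exact Or.inr (Or.inl h)
  | tail hsv hvw' ih =>
    rename_i v w''
    rcases ih with h1 | h1 | ⟨m, q, q', h1, h2, h3, h4, h5, h6⟩
    · exact Or.inl (h1.tail hvw')
    · rcases Relation.ReflTransGen.cases_head h1 with rfl | ⟨q, hvq, hqw⟩
      · exact Or.inl (Relation.ReflTransGen.single hvw')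
      · by_cases hqw' : q = w''
        · exact Or.inr (Or.inl (hqw' ▸ hqw))
        · exact Or.inr (Or.inr ⟨v, q, w'', hsv, hvq, hvw', hqw', hqw,
            Relation.ReflTransGen.refl⟩)
    · exact Or.inr (Or.inr ⟨m, q, q', h1, h2, h3, h4, h5, h6.tail hvw'⟩)

theorem three_le_deg {m p p' r : Fin n} (h1 : Q.G.Adj m p) (h2 : Q.G.Adj m p')
    (h3 : Q.G.Adj m r) (n1 : p ≠ p') (n2 : p ≠ r) (n3 : p' ≠ r) : 3 ≤ Q.deg m := by
  have hsub : ({p, p', r} : Set (Fin n)) ⊆ {j | Q.G.Adj m j} := by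
    intro z hz
    rcases hz with rfl | rfl | rfl
    · exact h1
    · exact h2
    · exact h3
  have h3c : ({p, p', r} : Set (Fin n)).ncard = 3 := by
    rw [Set.ncard_insert_of_notMem (by simp [n1, n2]) (Set.toFinite _),
      Set.ncard_insert_of_notMem (by simp [n3]) (Set.toFinite _), Set.ncard_singleton]
  rw [← h3c]
  exact Set.ncard_le_ncard hsub (Set.toFinite _)

/-- A vertex with two distinct in-arrows and an out-arrow contradicts admissibility. -/
theorem middle_in_contra (hadm : Q.Admissible) {m p p' r : Fin n} (hp : Q.arr p m)
    (hp' : Q.arr p' m) (hpp' : p ≠ p') (hr : Q.arr m r) : False := by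
  have hdeg : 3 ≤ Q.deg m := by
    refine three_le_deg (adj_of_arr hp).symm (adj_of_arr hp').symm (adj_of_arr hr) hpp' ?_ ?_
    · rintro rfl; exact Q.oneway _ _ hp hr
    · rintro rfl; exact Q.oneway _ _ hp' hr
  rcases hadm m hdeg with hs | hs
  · exact hs r hr
  · exact hs p hp

/-- A vertex with two distinct out-arrows and an in-arrow contradicts admissibility. -/
theorem middle_out_contra (hadm : Q.Admissible) {m q q' p : Fin n} (hq : Q.arr m q)
    (hq' : Q.arr m q') (hqq' : q ≠ q') (hp : Q.arr p m) : False := by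
  have hdeg : 3 ≤ Q.deg m := by
    refine three_le_deg (adj_of_arr hq) (adj_of_arr hq') (adj_of_arr hp).symm hqq' ?_ ?_
    · rintro rfl; exact Q.oneway _ _ hq hp
    · rintro rfl; exact Q.oneway _ _ hq' hp
  rcases hadm m hdeg with hs | hs
  · exact hs q hq
  · exact hs p hp

theorem two_le_suppDeg {S : Set (Fin n × Fin n)} {t p p' : Fin n}
    (h1 : Q.suppAdj S t p) (h2 : Q.suppAdj S t p') (hne : p ≠ p') : 2 ≤ Q.suppDeg S t := by
  have hsub : ({p, p'} : Set (Fin n)) ⊆ {j | Q.suppAdj S t j} := by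
    intro z hz
    rcases hz with rfl | rfl
    · exact h1
    · exact h2
  rw [show (2 : ℕ) = ({p, p'} : Set (Fin n)).ncard from (Set.ncard_pair hne).symm]
  exact Set.ncard_le_ncard hsub (Set.toFinite _)

/-- Key Lemma: for every maximal chain `(a,b)` in the support of a special function `x`,
`x a ≠ 0` and `b` is a successor of `x a`. -/
theorem KL (hadm : Q.Admissible) {x : Fin n → Option (Fin n)} (hx : Q.SpecialFun x)
    {a b : Fin n} (hc : (a, b) ∈ Q.suppF x) : ∃ y, x a = some y ∧ Q.Reach y b := by
  obtain ⟨hsrc, hsnk, hab⟩ := hc.1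
  obtain ⟨i, w, hiw, haw, hwb⟩ := hc.2
  have hiw' : Q.Reach i w := hx.1 i w hiw
  rcases mergeM hiw' haw with hia | hai | ⟨m, p, p', hip, hpm, hap', hp'm, hpp', hmw⟩
  · have : i = a := source_reach hsrc hia
    exact ⟨w, this ▸ hiw, hwb⟩
  · obtain ⟨y, hy, hyw⟩ := hx.2.1 i a w hai hiw
    exact ⟨y, hy, hyw.trans hwb⟩
  · have hmb : Q.Reach m b := hmw.trans hwb
    have hmeq : m = b := by
      by_contra hne
      rcases Relation.ReflTransGen.cases_head hmb with heq | ⟨r, hmr, -⟩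
      · exact hne heq
      · exact middle_in_contra hadm hpm hp'm hpp' hmr
    subst hmeq
    have hweq : w = m := sink_reach hsnk hmw
    have hiw2 : x i = some m := by rw [hweq] at hiw; exact hiw
    have hxb : x m ≠ none := by
      intro hnone
      have hdeg1 := hx.2.2.2 m (Or.inl hsnk) ⟨(a, m), hc, hab, Relation.ReflTransGen.refl⟩ hnone
      obtain ⟨a₂, ha₂s, ha₂i⟩ := exists_source Q i
      have hib : Q.Reach i m := hip.tail hpm
      have hchain2 : (a₂, m) ∈ Q.suppF x :=
        ⟨⟨ha₂s, hsnk, ha₂i.trans hib⟩, i, m, hiw2, ha₂i.trans hib, Relation.ReflTransGen.refl⟩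
      have hadj1 : Q.suppAdj (Q.suppF x) m p :=
        ⟨(adj_of_arr hpm).symm, (a₂, m), hchain2, ⟨ha₂i.trans hib, Relation.ReflTransGen.refl⟩,
          ⟨ha₂i.trans hip, Relation.ReflTransGen.single hpm⟩⟩
      have hadj2 : Q.suppAdj (Q.suppF x) m p' :=
        ⟨(adj_of_arr hp'm).symm, (a, m), hc, ⟨hab, Relation.ReflTransGen.refl⟩,
          ⟨hap', Relation.ReflTransGen.single hp'm⟩⟩
      have := two_le_suppDeg hadj1 hadj2 hpp'
      omega
    obtain ⟨z, hz⟩ := Option.ne_none_iff_exists'.1 hxb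
    have hzb : z = m := sink_reach hsnk (hx.1 m z hz)
    obtain ⟨y, hy, hyz⟩ := hx.2.1 m a z hab hz
    exact ⟨y, hy, hzb ▸ hyz⟩

/-- The set `S` of pairs `(t,s)` such that the path `a_{ts}` lies in `B_x`. -/
def Sset (Q : TreeQuiver n) (x : Fin n → Option (Fin n)) (c : Fin n × Fin n) : Prop :=
  ∃ u, x c.2 = some u ∧ Q.Reach u c.1

/-- One-step relation on `S` generating the connectivity equivalence. -/
def SRel (Q : TreeQuiver n) (x : Fin n → Option (Fin n)) (c d : Fin n × Fin n) : Prop :=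
  Sset Q x c ∧ Sset Q x d ∧
    ((c.2 = d.2 ∧ Q.Reach c.1 d.1) ∨ (c.1 = d.1 ∧ Q.Reach d.2 c.2))

theorem Sset_clo1 {x : Fin n → Option (Fin n)} {c : Fin n × Fin n} (h : Sset Q x c) {t' : Fin n}
    (hr : Q.Reach c.1 t') : Sset Q x (t', c.2) := by
  obtain ⟨u, hu, hut⟩ := h
  exact ⟨u, hu, hut.trans hr⟩

theorem Sset_clo2 {x : Fin n → Option (Fin n)} (hmono : Q.MonotoneFun x) {c : Fin n × Fin n}
    (h : Sset Q x c) {s' : Fin n} (hr : Q.Reach s' c.2) : Sset Q x (c.1, s') := by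
  obtain ⟨u, hu, hut⟩ := h
  obtain ⟨y, hy, hyu⟩ := hmono c.2 s' u hr hu
  exact ⟨y, hy, hyu.trans hut⟩

theorem L3 (hadm : Q.Admissible) {x : Fin n → Option (Fin n)} (hx : Q.SpecialFun x)
    {a b b' : Fin n} (h1 : (a, b) ∈ Q.suppF x) (h2 : (a, b') ∈ Q.suppF x) :
    Relation.EqvGen (SRel Q x) (b, a) (b', a) := by
  obtain ⟨y, hy, hyb⟩ := KL hadm hx h1
  obtain ⟨y', hy', hyb'⟩ := KL hadm hx h2
  rw [hy] at hy'
  injection hy' with hyy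
  subst hyy
  have s0 : Sset Q x (y, a) := ⟨y, hy, Relation.ReflTransGen.refl⟩
  have s1 : Sset Q x (b, a) := ⟨y, hy, hyb⟩
  have s2 : Sset Q x (b', a) := ⟨y, hy, hyb'⟩
  exact Relation.EqvGen.trans _ _ _
    (Relation.EqvGen.symm _ _ (Relation.EqvGen.rel _ _ ⟨s0, s1, Or.inl ⟨rfl, hyb⟩⟩))
    (Relation.EqvGen.rel _ _ ⟨s0, s2, Or.inl ⟨rfl, hyb'⟩⟩)

theorem L2 (hadm : Q.Admissible) {x : Fin n → Option (Fin n)} (hx : Q.SpecialFun x)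
    {a a' t : Fin n} (h1 : (a, t) ∈ Q.suppF x) (h2 : (a', t) ∈ Q.suppF x) :
    Relation.EqvGen (SRel Q x) (t, a) (t, a') := by
  obtain ⟨hsrc, hsnk, hat⟩ := h1.1
  obtain ⟨hsrc', -, hat'⟩ := h2.1
  rcases mergeM hat hat' with hr | hr | ⟨m, p, p', hap, hpm, ha'p', hp'm, hpp', hmt⟩
  · have : a = a' := source_reach hsrc' hr
    exact this ▸ Relation.EqvGen.refl _
  · have : a' = a := source_reach hsrc hr
    exact this ▸ Relation.EqvGen.refl _
  · have hmeq : m = t := by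
      by_contra hne
      rcases Relation.ReflTransGen.cases_head hmt with heq | ⟨r, hmr, -⟩
      · exact hne heq
      · exact middle_in_contra hadm hpm hp'm hpp' hmr
    subst hmeq
    have hxt : x m ≠ none := by
      intro hnone
      have hdeg1 := hx.2.2.2 m (Or.inl hsnk)
        ⟨(a, m), h1, hat, Relation.ReflTransGen.refl⟩ hnone
      have hadj1 : Q.suppAdj (Q.suppF x) m p :=
        ⟨(adj_of_arr hpm).symm, (a, m), h1, ⟨hat, Relation.ReflTransGen.refl⟩,
          ⟨hap, Relation.ReflTransGen.single hpm⟩⟩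
      have hadj2 : Q.suppAdj (Q.suppF x) m p' :=
        ⟨(adj_of_arr hp'm).symm, (a', m), h2, ⟨hat', Relation.ReflTransGen.refl⟩,
          ⟨ha'p', Relation.ReflTransGen.single hp'm⟩⟩
      have := two_le_suppDeg hadj1 hadj2 hpp'
      omega
    obtain ⟨z, hz⟩ := Option.ne_none_iff_exists'.1 hxt
    have hzm : z = m := sink_reach hsnk (hx.1 m z hz)
    subst hzm
    have s0 : Sset Q x (z, z) := ⟨z, hz, Relation.ReflTransGen.refl⟩
    have s1 : Sset Q x (z, a) := KL hadm hx h1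
    have s2 : Sset Q x (z, a') := KL hadm hx h2
    exact Relation.EqvGen.trans _ _ _
      (Relation.EqvGen.symm _ _ (Relation.EqvGen.rel _ _ ⟨s0, s1, Or.inr ⟨rfl, hat⟩⟩))
      (Relation.EqvGen.rel _ _ ⟨s0, s2, Or.inr ⟨rfl, hat'⟩⟩)

theorem L1 (hadm : Q.Admissible) {x : Fin n → Option (Fin n)} (hx : Q.SpecialFun x)
    {a b a' b' v : Fin n} (h1 : (a, b) ∈ Q.suppF x) (h2 : (a', b') ∈ Q.suppF x)
    (hv1 : v ∈ Q.chainSet a b) (hv2 : v ∈ Q.chainSet a' b') :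
    Relation.EqvGen (SRel Q x) (b, a) (b', a') := by
  obtain ⟨hsrc, hsnk, hab⟩ := h1.1
  obtain ⟨hsrc', hsnk', hab'⟩ := h2.1
  rcases divergeM hv1.2 hv2.2 with hr | hr | ⟨m, q, q', hvm, hmq, hmq', hqq', hqb, hq'b'⟩
  · have : b' = b := sink_reach hsnk hr
    subst this
    exact L2 hadm hx h1 h2
  · have : b = b' := sink_reach hsnk' hr
    subst this
    exact L2 hadm hx h1 h2
  · have ham : Q.Reach a m := hv1.1.trans hvm
    have ha'm : Q.Reach a' m := hv2.1.trans hvm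
    have hma : m = a := by
      rcases Relation.ReflTransGen.cases_tail ham with heq | ⟨p₀, -, hp₀⟩
      · exact heq
      · exact (middle_out_contra hadm hmq hmq' hqq' hp₀).elim
    have hma' : m = a' := by
      rcases Relation.ReflTransGen.cases_tail ha'm with heq | ⟨p₀, -, hp₀⟩
      · exact heq
      · exact (middle_out_contra hadm hmq hmq' hqq' hp₀).elim
    have haa' : a = a' := hma ▸ hma'
    subst haa'
    exact L3 hadm hx h1 h2

theorem conn_main (hadm : Q.Admissible) {x : Fin n → Option (Fin n)} (hx : Q.SpecialFun x) :
    ∀ c d, Sset Q x c → Sset Q x d → Relation.EqvGen (SRel Q x) c d := by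
  have step1 : ∀ c, Sset Q x c → ∃ a b, (a, b) ∈ Q.suppF x ∧
      Relation.EqvGen (SRel Q x) c (b, a) := by
    rintro ⟨t, s⟩ ⟨u, hu, hut⟩
    obtain ⟨a, has, har⟩ := exists_source Q s
    obtain ⟨b, hbs, hbr⟩ := exists_sink Q t
    have hsu : Q.Reach s u := hx.1 s u hu
    have hchain : (a, b) ∈ Q.suppF x :=
      ⟨⟨has, hbs, (har.trans hsu).trans (hut.trans hbr)⟩, s, u, hu,
        har.trans hsu, hut.trans hbr⟩
    have s1 : Sset Q x (t, s) := ⟨u, hu, hut⟩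
    have s2 : Sset Q x (b, s) := ⟨u, hu, hut.trans hbr⟩
    have s3 : Sset Q x (b, a) := KL hadm hx hchain
    exact ⟨a, b, hchain, Relation.EqvGen.trans _ _ _
      (Relation.EqvGen.rel _ _ ⟨s1, s2, Or.inl ⟨rfl, hbr⟩⟩)
      (Relation.EqvGen.rel _ _ ⟨s2, s3, Or.inr ⟨rfl, har⟩⟩)⟩
  have step2 : ∀ C D : Fin n × Fin n, C ∈ Q.suppF x → D ∈ Q.suppF x →
      Relation.EqvGen (SRel Q x) (C.2, C.1) (D.2, D.1) := by
    rintro ⟨a, b⟩ ⟨a', b'⟩ hC hD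
    have hv0 : a ∈ Q.suppVerts (Q.suppF x) :=
      ⟨(a, b), hC, Relation.ReflTransGen.refl, hC.1.2.2⟩
    have hv0' : a' ∈ Q.suppVerts (Q.suppF x) :=
      ⟨(a', b'), hD, Relation.ReflTransGen.refl, hD.1.2.2⟩
    have hpath := hx.2.2.1 a hv0 a' hv0'
    have key : ∀ v, Relation.ReflTransGen (Q.suppAdj (Q.suppF x)) a v →
        ∀ E : Fin n × Fin n, E ∈ Q.suppF x → v ∈ Q.chainSet E.1 E.2 →
        Relation.EqvGen (SRel Q x) (b, a) (E.2, E.1) := by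
      intro v hv
      induction hv with
      | refl =>
        intro E hE hmem
        exact L1 hadm hx hC hE ⟨Relation.ReflTransGen.refl, hC.1.2.2⟩ hmem
      | tail hav hsadj ih =>
        intro E hE hmem
        obtain ⟨hadj, E₀, hE₀, hm1, hm2⟩ := hsadj
        exact Relation.EqvGen.trans _ _ _ (ih E₀ hE₀ hm1) (L1 hadm hx hE₀ hE hm2 hmem)
    exact key a' hpath (a', b') hD ⟨Relation.ReflTransGen.refl, hD.1.2.2⟩
  intro c d hc hd
  obtain ⟨a, b, hab, h1⟩ := step1 c hc
  obtain ⟨a', b', hab', h2⟩ := step1 d hd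
  exact Relation.EqvGen.trans _ _ _ h1 (Relation.EqvGen.trans _ _ _
    (step2 (a, b) (a', b') hab hab') (Relation.EqvGen.symm _ _ h2))

end AuxQuiver

section AuxAlgebra

open Matrix

variable {n : ℕ} (Q : TreeQuiver n) (k : Type) [Field k]

theorem entry_zero (a : ↥(pathAlg Q k)) {t s : Fin n} (h : ¬ Q.Reach s t) :
    (a : Matrix (Fin n) (Fin n) k) t s = 0 := a.2 t s h

theorem aEl_val {t s : Fin n} (h : Q.Reach s t) :
    ((aEl Q k t s : ↥(pathAlg Q k)) : Matrix (Fin n) (Fin n) k) = single t s 1 := by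
  rw [aEl, dif_pos h]

theorem aEl_val_not {t s : Fin n} (h : ¬ Q.Reach s t) : aEl Q k t s = 0 := by
  rw [aEl, dif_neg h]

theorem e_val (i : Fin n) :
    ((e Q k i : ↥(pathAlg Q k)) : Matrix (Fin n) (Fin n) k) = single i i 1 := rfl

theorem aEl_mul {a b c : Fin n} (h1 : Q.Reach b a) (h2 : Q.Reach c b) :
    aEl Q k a b * aEl Q k b c = aEl Q k a c := by
  apply Subtype.ext
  rw [MulMemClass.coe_mul, aEl_val Q k h1, aEl_val Q k h2, aEl_val Q k (h2.trans h1),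
    Matrix.single_mul_single_same, one_mul]

theorem aEl_ne_zero {t s : Fin n} (h : Q.Reach s t) : aEl Q k t s ≠ 0 := by
  intro h0
  have h1 := congrArg (fun z : ↥(pathAlg Q k) => (z : Matrix (Fin n) (Fin n) k) t s) h0
  rw [aEl_val Q k h] at h1
  simp only [Matrix.single_apply_same] at h1
  exact one_ne_zero (h1.trans (by simp [ZeroMemClass.coe_zero]))

theorem proj_matrix (M : Matrix (Fin n) (Fin n) k) (t s : Fin n) :
    single t t (1:k) * M * single s s 1 = M t s • single t s 1 := by
  ext i j
  simp only [Matrix.mul_apply, Matrix.single, Matrix.of_apply, Matrix.smul_apply,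
    ite_mul, mul_ite, one_mul, mul_one, zero_mul, mul_zero, smul_ite, smul_eq_mul, smul_zero]
  by_cases hi : t = i <;> by_cases hj : s = j <;>
    simp [hi, hj, Finset.sum_ite_eq, Finset.sum_ite_eq']

theorem proj_mem {B : Submodule k ↥(pathAlg Q k)} (hB : IsIdeal Q k B) {b : ↥(pathAlg Q k)}
    (hb : b ∈ B) (t s : Fin n) (hre : Q.Reach s t) :
    ((b : Matrix (Fin n) (Fin n) k) t s) • aEl Q k t s ∈ B := by
  have h1 := hB.2 (e Q k s) _ (hB.1 (e Q k t) b hb)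
  have h2 : e Q k t * b * e Q k s = ((b : Matrix (Fin n) (Fin n) k) t s) • aEl Q k t s := by
    apply Subtype.ext
    rw [MulMemClass.coe_mul, MulMemClass.coe_mul, e_val, e_val, SetLike.val_smul,
      aEl_val Q k hre, proj_matrix]
  rwa [h2] at h1

theorem unit_mem {B : Submodule k ↥(pathAlg Q k)} (hB : IsIdeal Q k B) {b : ↥(pathAlg Q k)}
    (hb : b ∈ B) {t s : Fin n} (hre : Q.Reach s t)
    (hne : (b : Matrix (Fin n) (Fin n) k) t s ≠ 0) : aEl Q k t s ∈ B := by
  have h1 := B.smul_mem ((b : Matrix (Fin n) (Fin n) k) t s)⁻¹ (proj_mem Q k hB hb t s hre)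
  rwa [smul_smul, inv_mul_cancel₀ hne, one_smul] at h1

theorem decomp (a : ↥(pathAlg Q k)) :
    a = ∑ t : Fin n, ∑ s : Fin n, ((a : Matrix (Fin n) (Fin n) k) t s) • aEl Q k t s := by
  apply Subtype.ext
  rw [AddSubmonoidClass.coe_finset_sum]
  conv_lhs => rw [Matrix.matrix_eq_sum_single (a : Matrix (Fin n) (Fin n) k)]
  refine Finset.sum_congr rfl fun t _ => ?_
  rw [AddSubmonoidClass.coe_finset_sum]
  refine Finset.sum_congr rfl fun s _ => ?_
  rw [SetLike.val_smul]
  by_cases h : Q.Reach s t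
  · rw [aEl_val Q k h, Matrix.smul_single]
    congr 1
    simp
  · rw [entry_zero Q k a h, aEl_val_not Q k h]
    simp

theorem Bspan_supp {x : Fin n → Option (Fin n)} (hpf : Q.IsPathFun x) {b : ↥(pathAlg Q k)}
    (hb : b ∈ Bspan Q k x) :
    ∀ t s, (b : Matrix (Fin n) (Fin n) k) t s ≠ 0 → Sset Q x (t, s) := by
  induction hb using Submodule.span_induction with
  | mem v hv =>
    obtain ⟨s₀, xs, t₀, hx0, hre, rfl⟩ := hv
    intro t s hne
    have hre' : Q.Reach s₀ t₀ := (hpf s₀ xs hx0).trans hre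
    rw [aEl_val Q k hre'] at hne
    simp only [Matrix.single, Matrix.of_apply, ne_eq, ite_eq_right_iff,
      one_ne_zero, imp_false, not_not] at hne
    obtain ⟨rfl, rfl⟩ := hne
    exact ⟨xs, hx0, hre⟩
  | zero => intro t s hne; simp at hne
  | add v w hv hw ihv ihw =>
    intro t s hne
    rw [AddMemClass.coe_add, Matrix.add_apply] at hne
    by_cases h0 : (v : Matrix (Fin n) (Fin n) k) t s = 0
    · exact ihw t s (by intro h; rw [h0, h, add_zero] at hne; exact hne rfl)
    · exact ihv t s h0
  | smul c v hv ihv =>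
    intro t s hne
    rw [SetLike.val_smul, Matrix.smul_apply] at hne
    exact ihv t s (right_ne_zero_of_smul hne)

theorem supp_Bspan {x : Fin n → Option (Fin n)} {b : ↥(pathAlg Q k)}
    (h : ∀ t s, (b : Matrix (Fin n) (Fin n) k) t s ≠ 0 → Sset Q x (t, s)) :
    b ∈ Bspan Q k x := by
  rw [decomp Q k b]
  refine Submodule.sum_mem _ fun t _ => Submodule.sum_mem _ fun s _ => ?_
  by_cases h0 : (b : Matrix (Fin n) (Fin n) k) t s = 0
  · rw [h0, zero_smul]; exact zero_mem _
  · obtain ⟨u, hu, hut⟩ := h t s h0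
    exact Submodule.smul_mem _ _ (Submodule.subset_span ⟨s, u, t, hu, hut, rfl⟩)

theorem isIdeal_Bspan {x : Fin n → Option (Fin n)} (hx : Q.SpecialFun x) :
    IsIdeal Q k (Bspan Q k x) := by
  constructor
  · intro a b hb
    apply supp_Bspan
    intro t s hne
    rw [MulMemClass.coe_mul, Matrix.mul_apply] at hne
    obtain ⟨m, -, hm⟩ := Finset.exists_ne_zero_of_sum_ne_zero hne
    have h1 : (a : Matrix (Fin n) (Fin n) k) t m ≠ 0 := left_ne_zero_of_mul hm
    have h2 : (b : Matrix (Fin n) (Fin n) k) m s ≠ 0 := right_ne_zero_of_mul hm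
    have hrm : Q.Reach m t := by
      by_contra hcon; exact h1 (entry_zero Q k a hcon)
    exact Sset_clo1 (Bspan_supp Q k hx.1 hb m s h2) hrm
  · intro a b hb
    apply supp_Bspan
    intro t s hne
    rw [MulMemClass.coe_mul, Matrix.mul_apply] at hne
    obtain ⟨m, -, hm⟩ := Finset.exists_ne_zero_of_sum_ne_zero hne
    have h1 : (b : Matrix (Fin n) (Fin n) k) t m ≠ 0 := left_ne_zero_of_mul hm
    have h2 : (a : Matrix (Fin n) (Fin n) k) m s ≠ 0 := right_ne_zero_of_mul hm
    have hrm : Q.Reach s m := by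
      by_contra hcon; exact h2 (entry_zero Q k a hcon)
    exact Sset_clo2 hx.2.1 (Bspan_supp Q k hx.1 hb t m h1) hrm

theorem Bspan_ne_bot {x : Fin n → Option (Fin n)} (hpf : Q.IsPathFun x)
    (hx0 : ∃ i, x i ≠ none) : Bspan Q k x ≠ ⊥ := by
  obtain ⟨i, hi⟩ := hx0
  obtain ⟨u, hu⟩ := Option.ne_none_iff_exists'.1 hi
  have hmem : aEl Q k u i ∈ Bspan Q k x :=
    Submodule.subset_span ⟨i, u, u, hu, Relation.ReflTransGen.refl, rfl⟩
  intro hbot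
  rw [hbot, Submodule.mem_bot] at hmem
  exact aEl_ne_zero Q k (hpf i u hu) hmem

theorem not_both {B1 B2 : Submodule k ↥(pathAlg Q k)} (hinf : B1 ⊓ B2 = ⊥) {t s : Fin n}
    (hre : Q.Reach s t) (h1 : aEl Q k t s ∈ B1) (h2 : aEl Q k t s ∈ B2) : False := by
  have hmem : aEl Q k t s ∈ B1 ⊓ B2 := ⟨h1, h2⟩
  rw [hinf, Submodule.mem_bot] at hmem
  exact aEl_ne_zero Q k hre hmem

theorem reach_of_Sset {x : Fin n → Option (Fin n)} (hpf : Q.IsPathFun x) {c : Fin n × Fin n}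
    (hc : Sset Q x c) : Q.Reach c.2 c.1 := by
  obtain ⟨u, hu, hut⟩ := hc
  exact (hpf c.2 u hu).trans hut

theorem unit_split {x : Fin n → Option (Fin n)} (hx : Q.SpecialFun x)
    {B1 B2 : Submodule k ↥(pathAlg Q k)} (hB1 : IsIdeal Q k B1) (hB2 : IsIdeal Q k B2)
    (hsup : B1 ⊔ B2 = Bspan Q k x) (hinf : B1 ⊓ B2 = ⊥) {c : Fin n × Fin n}
    (hc : Sset Q x c) : aEl Q k c.1 c.2 ∈ B1 ∨ aEl Q k c.1 c.2 ∈ B2 := by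
  obtain ⟨u, hu, hut⟩ := hc
  have hre : Q.Reach c.2 c.1 := (hx.1 c.2 u hu).trans hut
  have hmemB : aEl Q k c.1 c.2 ∈ B1 ⊔ B2 := by
    rw [hsup]
    exact Submodule.subset_span ⟨c.2, u, c.1, hu, hut, rfl⟩
  obtain ⟨y, hy, z, hz, hyz⟩ := Submodule.mem_sup.1 hmemB
  have hsum : (y : Matrix (Fin n) (Fin n) k) c.1 c.2
      + (z : Matrix (Fin n) (Fin n) k) c.1 c.2 = 1 := by
    have h1 := congrArg (fun w : ↥(pathAlg Q k) => (w : Matrix (Fin n) (Fin n) k) c.1 c.2) hyz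
    simp only [AddMemClass.coe_add, Matrix.add_apply] at h1
    rw [h1, aEl_val Q k hre, Matrix.single_apply_same]
  by_cases hy0 : (y : Matrix (Fin n) (Fin n) k) c.1 c.2 = 0
  · right
    have hz1 : (z : Matrix (Fin n) (Fin n) k) c.1 c.2 = 1 := by
      rw [hy0, zero_add] at hsum; exact hsum
    have := proj_mem Q k hB2 hz c.1 c.2 hre
    rwa [hz1, one_smul] at this
  · exact Or.inl (unit_mem Q k hB1 hy hre hy0)

theorem rel_invariant {x : Fin n → Option (Fin n)} (hx : Q.SpecialFun x)
    {B1 B2 : Submodule k ↥(pathAlg Q k)} (hB1 : IsIdeal Q k B1) (hB2 : IsIdeal Q k B2)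
    (hsup : B1 ⊔ B2 = Bspan Q k x) (hinf : B1 ⊓ B2 = ⊥) {c d : Fin n × Fin n}
    (hrel : SRel Q x c d) : (aEl Q k c.1 c.2 ∈ B1 ↔ aEl Q k d.1 d.2 ∈ B1) := by
  obtain ⟨hc, hd, hcase⟩ := hrel
  have hrec : Q.Reach c.2 c.1 := reach_of_Sset Q hx.1 hc
  have hred : Q.Reach d.2 d.1 := reach_of_Sset Q hx.1 hd
  have fwd : ∀ B : Submodule k ↥(pathAlg Q k), IsIdeal Q k B →
      aEl Q k c.1 c.2 ∈ B → aEl Q k d.1 d.2 ∈ B := by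
    intro B hB hmem
    rcases hcase with ⟨h21, hr⟩ | ⟨h11, hr⟩
    · have heq : aEl Q k d.1 c.1 * aEl Q k c.1 c.2 = aEl Q k d.1 d.2 := by
        rw [aEl_mul Q k hr hrec, h21]
      rw [← heq]
      exact hB.1 _ _ hmem
    · have heq : aEl Q k c.1 c.2 * aEl Q k c.2 d.2 = aEl Q k d.1 d.2 := by
        rw [aEl_mul Q k hrec hr, h11]
      rw [← heq]
      exact hB.2 _ _ hmem
  constructor
  · exact fwd B1 hB1
  · intro h
    rcases unit_split Q k hx hB1 hB2 hsup hinf hc with h1 | h2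
    · exact h1
    · exact (not_both Q k hinf hred h (fwd B2 hB2 h2)).elim

theorem eqvgen_invariant {x : Fin n → Option (Fin n)} (hx : Q.SpecialFun x)
    {B1 B2 : Submodule k ↥(pathAlg Q k)} (hB1 : IsIdeal Q k B1) (hB2 : IsIdeal Q k B2)
    (hsup : B1 ⊔ B2 = Bspan Q k x) (hinf : B1 ⊓ B2 = ⊥) {c d : Fin n × Fin n}
    (h : Relation.EqvGen (SRel Q x) c d) :
    (aEl Q k c.1 c.2 ∈ B1 ↔ aEl Q k d.1 d.2 ∈ B1) := by
  induction h with
  | rel a b hab => exact rel_invariant Q k hx hB1 hB2 hsup hinf hab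
  | refl a => exact Iff.rfl
  | symm a b _ ih => exact ih.symm
  | trans a b c _ _ ih1 ih2 => exact ih1.trans ih2

theorem indec_Bspan (hadm : Q.Admissible) {x : Fin n → Option (Fin n)} (hx : Q.SpecialFun x) :
    ∀ B1 B2 : Submodule k ↥(pathAlg Q k), IsIdeal Q k B1 → IsIdeal Q k B2 →
      B1 ⊔ B2 = Bspan Q k x → B1 ⊓ B2 = ⊥ → B1 = ⊥ ∨ B2 = ⊥ := by
  intro B1 B2 hB1 hB2 hsup hinf
  have extract : ∀ (B : Submodule k ↥(pathAlg Q k)), IsIdeal Q k B → B ≤ Bspan Q k x →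
      ∀ b ∈ B, b ≠ 0 → ∃ t s, Sset Q x (t, s) ∧ Q.Reach s t ∧ aEl Q k t s ∈ B := by
    intro B hB hle b hb hb0
    have hvne : (b : Matrix (Fin n) (Fin n) k) ≠ 0 := by
      intro h; exact hb0 (Subtype.ext (by rw [h]; rfl))
    obtain ⟨t, s, hts⟩ : ∃ t s, (b : Matrix (Fin n) (Fin n) k) t s ≠ 0 := by
      by_contra hall
      push_neg at hall
      exact hvne (by ext t s; rw [hall t s]; rfl)
    have hS : Sset Q x (t, s) := Bspan_supp Q k hx.1 (hle hb) t s hts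
    have hre : Q.Reach s t := reach_of_Sset Q hx.1 hS
    exact ⟨t, s, hS, hre, unit_mem Q k hB hb hre hts⟩
  by_cases hex : ∃ c, Sset Q x c ∧ aEl Q k c.1 c.2 ∈ B1
  · right
    rw [Submodule.eq_bot_iff]
    intro b hb
    by_contra hb0
    obtain ⟨t, s, hS, hre, hin2⟩ := extract B2 hB2 (hsup ▸ le_sup_right) b hb hb0
    obtain ⟨c0, hc0, hc0mem⟩ := hex
    have hconn := conn_main hadm hx c0 (t, s) hc0 hS
    have hin1 : aEl Q k t s ∈ B1 :=
      (eqvgen_invariant Q k hx hB1 hB2 hsup hinf hconn).1 hc0mem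
    exact not_both Q k hinf hre hin1 hin2
  · left
    rw [Submodule.eq_bot_iff]
    intro b hb
    by_contra hb0
    obtain ⟨t, s, hS, hre, hin1⟩ := extract B1 hB1 (hsup ▸ le_sup_left) b hb hb0
    exact hex ⟨(t, s), hS, hin1⟩

theorem suppF_eq_suppB (hadm : Q.Admissible) {x : Fin n → Option (Fin n)}
    (hx : Q.SpecialFun x) : Q.suppF x = suppB Q k (Bspan Q k x) := by
  ext ⟨a, b⟩
  constructor
  · intro h
    obtain ⟨y, hy, hyb⟩ := KL hadm hx h
    exact ⟨h.1, Submodule.subset_span ⟨a, y, b, hy, hyb, rfl⟩⟩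
  · rintro ⟨hmax, hmem⟩
    have hre : Q.Reach a b := hmax.2.2
    have hne : ((aEl Q k b a : ↥(pathAlg Q k)) : Matrix (Fin n) (Fin n) k) b a ≠ 0 := by
      rw [aEl_val Q k hre, Matrix.single_apply_same]
      exact one_ne_zero
    obtain ⟨u, hu, hub⟩ := Bspan_supp Q k hx.1 hmem b a hne
    exact ⟨hmax, a, u, hu, hx.1 a u hu, hub⟩

end AuxAlgebra


/-- For every nonzero special function `x` for `Q`, the subspace `B_x` of `A`
is an indecomposable sub-bimodule of `A`, and `supp(x) = supp(B_x)` (as subgraphs of `Q`). -/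
theorem statement4 {n : ℕ} (k : Type) [Field k] [IsAlgClosed k] (hn : 1 < n)
    (Q : TreeQuiver n) (hadm : Q.Admissible) (hK' : ∃ s, Q.inK' s)
    (x : Fin n → Option (Fin n)) (hx : Q.SpecialFun x) (hx0 : ∃ i, x i ≠ none) :
    Indec Q k (Bspan Q k x) ∧ Q.SuppEq (Q.suppF x) (suppB Q k (Bspan Q k x)) := by
  have hsupp : Q.suppF x = suppB Q k (Bspan Q k x) := suppF_eq_suppB Q k hadm hx
  refine ⟨⟨isIdeal_Bspan Q k hx, Bspan_ne_bot Q k hx.1 hx0, indec_Bspan Q k hadm hx⟩,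
    by rw [hsupp], fun i j => by rw [hsupp]⟩

end DPF
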